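/- The formal power series F̃ = I_{a,ξ}(x^{1/5}, q^{−1}) satisfies (∏_{k=0}^{4} (id − p^{5(a−k)} R_{q^5})) F̃ = q^{14+4a} · X · R_{q^{20}} ((id − ξ^{−1} p^{a+1} R_q)^5 F̃) in ℂ[[X]]; equivalently, it is annihilated by the q-difference operator ∏_{k=0}^{4} (1 − q^{−k+5x∂_x+a}) − x q^{15+4a−1+20x∂_x} (1 − ξ^{−1} q^{(a+1)/5+x∂_x})^5. -/

import Mathlib

set_option maxHeartbeats 1600000 in
/-- Fix `p ≠ 0` not a root of unity, `q = p^5`, `ξ` a fifth root of unity, and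
`0 ≤ a ≤ 4`.  The series `F̃ = I_{a,ξ}(x^{1/5}, q^{−1})`, i.e. the formal power
series with coefficients
`c̃_d = (∏_{k=0}^{d−1} (1 − ξ p^{−(a+1+5k)})^5) / (∏_{k=1}^{5d+a} (1 − q^{−k}))`,
satisfies
`(∏_{k=0}^{4} (id − p^{5(a−k)} R_{q^5})) F̃
  = q^{14+4a} · X · R_{q^{20}} ((id − ξ^{−1} p^{a+1} R_q)^5 F̃)`,
where `R_c` is the rescaling operator `X ↦ cX`; equivalently `F̃` is annihilated
by `∏_{k=0}^{4} (1 − q^{−k+5x∂_x+a}) − x q^{15+4a−1+20x∂_x} (1 − ξ^{−1} q^{(a+1)/5+x∂_x})^5`. -/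
theorem quintic_I_function_q_inverse_difference
    (p : ℂ) (hp : p ≠ 0) (hproot : ∀ n : ℕ, n ≠ 0 → p ^ n ≠ 1)
    (q : ℂ) (hq : q = p ^ 5)
    (ξ : ℂ) (hξ : ξ ^ 5 = 1)
    (a : ℕ) (ha : a ≤ 4)
    (F : PowerSeries ℂ)
    (hF : F = PowerSeries.mk fun d =>
      (∏ k ∈ Finset.range d, (1 - ξ * p ^ (-((a : ℤ) + 1 + 5 * (k : ℤ)))) ^ 5) /
      (∏ k ∈ Finset.range (5 * d + a), (1 - q ^ (-((k : ℤ) + 1)))))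
    -- the five commuting operators `L k = id − p^{5(a−k)} R_{q^5}`, k = 0,…,4
    (L : ℕ → PowerSeries ℂ → PowerSeries ℂ)
    (hL : ∀ (k : ℕ) (f : PowerSeries ℂ),
      L k f = f - p ^ (5 * ((a : ℤ) - (k : ℤ))) • PowerSeries.rescale (q ^ 5) f)
    -- the operator `B = id − ξ⁻¹ p^{a+1} R_q`
    (B : PowerSeries ℂ → PowerSeries ℂ)
    (hB : ∀ f : PowerSeries ℂ,
      B f = f - (ξ⁻¹ * p ^ (a + 1)) • PowerSeries.rescale q f) :
    L 0 (L 1 (L 2 (L 3 (L 4 F)))) =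
      q ^ (14 + 4 * a) •
        (PowerSeries.X * PowerSeries.rescale (q ^ 20) (B (B (B (B (B F)))))) := by
  subst hq
  have hq0 : (p:ℂ) ^ 5 ≠ 0 := pow_ne_zero 5 hp
  have hξ0 : ξ ≠ 0 := by intro h; rw [h] at hξ; norm_num at hξ
  -- rewrite zpow coefficients
  have hLc : ∀ k : ℕ, p ^ (5 * ((a : ℤ) - (k : ℤ))) = (p ^ 5) ^ a * ((p ^ 5) ^ k)⁻¹ := by
    intro k
    rw [zpow_mul, zpow_sub₀ (zpow_ne_zero 5 hp)]
    norm_cast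
  have hnum : ∀ k : ℕ, p ^ (-((a : ℤ) + 1 + 5 * (k : ℤ))) = (p ^ (a + 1 + 5 * k))⁻¹ := by
    intro k
    rw [← zpow_natCast p (a + 1 + 5 * k), ← zpow_neg]
    norm_cast
  have hqden : ∀ k : ℕ, (p ^ 5) ^ (-((k : ℤ) + 1)) = ((p ^ 5) ^ (k + 1))⁻¹ := by
    intro k
    rw [← zpow_natCast (p ^ 5) (k + 1), ← zpow_neg]
    norm_cast
  -- denominator factors are nonzero
  have hden : ∀ k : ℕ, (1 : ℂ) - ((p ^ 5) ^ (k + 1))⁻¹ ≠ 0 := by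
    intro k h
    have h1 : ((p ^ 5) ^ (k + 1))⁻¹ = 1 := by linear_combination -h
    have h2 : (p ^ 5) ^ (k + 1) = 1 := by
      have := congrArg (·⁻¹) h1
      simpa using this
    exact hproot (5 * (k + 1)) (by positivity) (by rw [pow_mul]; exact h2)
  -- coefficient formulas for L and B
  have cL : ∀ (k : ℕ) (f : PowerSeries ℂ) (d : ℕ),
      PowerSeries.coeff d (L k f)
        = (1 - (p ^ 5) ^ a * ((p ^ 5) ^ k)⁻¹ * ((p ^ 5) ^ 5) ^ d) * PowerSeries.coeff d f := by
    intro k f d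
    rw [hL k f, map_sub, PowerSeries.coeff_smul, PowerSeries.coeff_rescale, hLc k,
      smul_eq_mul]
    ring
  have cB : ∀ (f : PowerSeries ℂ) (d : ℕ),
      PowerSeries.coeff d (B f)
        = (1 - ξ⁻¹ * p ^ (a + 1) * (p ^ 5) ^ d) * PowerSeries.coeff d f := by
    intro f d
    rw [hB f, map_sub, PowerSeries.coeff_smul, PowerSeries.coeff_rescale, smul_eq_mul]
    ring
  -- coefficients of F
  have cF : ∀ d : ℕ, PowerSeries.coeff d F
      = (∏ k ∈ Finset.range d, (1 - ξ * (p ^ (a + 1 + 5 * k))⁻¹) ^ 5) /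
        (∏ k ∈ Finset.range (5 * d + a), (1 - ((p ^ 5) ^ (k + 1))⁻¹)) := by
    intro d
    rw [hF, PowerSeries.coeff_mk]
    simp only [hnum, hqden]
  apply PowerSeries.ext
  intro d
  rw [cL, cL, cL, cL, cL, PowerSeries.coeff_smul]
  match d with
  | 0 =>
    rw [PowerSeries.coeff_zero_X_mul, smul_zero]
    have hc : ∀ b : ℕ, b ≤ 4 → (1 - (p ^ 5) ^ a * ((p ^ 5) ^ b)⁻¹ * ((p ^ 5) ^ 5) ^ 0)
        = 1 - (p ^ 5) ^ a * ((p ^ 5) ^ b)⁻¹ := by intro b _; ring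
    interval_cases a <;>
      simp [mul_inv_cancel₀, hq0, pow_ne_zero, sub_self] <;>
      field_simp <;> ring
  | n + 1 =>
    rw [PowerSeries.coeff_succ_X_mul, PowerSeries.coeff_rescale, cB, cB, cB, cB, cB,
      cF, cF, smul_eq_mul]
    have hnumrec : (∏ k ∈ Finset.range (n + 1), (1 - ξ * (p ^ (a + 1 + 5 * k))⁻¹) ^ 5)
        = (∏ k ∈ Finset.range n, (1 - ξ * (p ^ (a + 1 + 5 * k))⁻¹) ^ 5)
          * (1 - ξ * (p ^ (a + 1 + 5 * n))⁻¹) ^ 5 := Finset.prod_range_succ _ _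
    have hd5 : 5 * (n + 1) + a = (5 * n + a) + 1 + 1 + 1 + 1 + 1 := by ring
    have hdenrec : (∏ k ∈ Finset.range (5 * (n + 1) + a), (1 - ((p ^ 5) ^ (k + 1))⁻¹))
        = (∏ k ∈ Finset.range (5 * n + a), (1 - ((p ^ 5) ^ (k + 1))⁻¹))
          * (1 - ((p ^ 5) ^ (5 * n + a + 1))⁻¹) * (1 - ((p ^ 5) ^ (5 * n + a + 2))⁻¹)
          * (1 - ((p ^ 5) ^ (5 * n + a + 3))⁻¹) * (1 - ((p ^ 5) ^ (5 * n + a + 4))⁻¹)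
          * (1 - ((p ^ 5) ^ (5 * n + a + 5))⁻¹) := by
      rw [hd5, Finset.prod_range_succ, Finset.prod_range_succ, Finset.prod_range_succ,
        Finset.prod_range_succ, Finset.prod_range_succ]
    have hBfac : (1 - ξ⁻¹ * p ^ (a + 1) * (p ^ 5) ^ n) ^ 5
        = -(p ^ (a + 1 + 5 * n)) ^ 5 * (1 - ξ * (p ^ (a + 1 + 5 * n))⁻¹) ^ 5 := by
      have h1 : 1 - ξ⁻¹ * p ^ (a + 1) * (p ^ 5) ^ n
          = (-(ξ⁻¹ * p ^ (a + 1 + 5 * n))) * (1 - ξ * (p ^ (a + 1 + 5 * n))⁻¹) := by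
        field_simp
        ring
      rw [h1, mul_pow,
        show (-(ξ⁻¹ * p ^ (a + 1 + 5 * n))) ^ 5
          = -((ξ ^ 5)⁻¹ * (p ^ (a + 1 + 5 * n)) ^ 5) by rw [← inv_pow]; ring,
        hξ]
      ring
    have key : ∀ k j : ℕ, k + j = 5 →
        (1 : ℂ) - (p ^ 5) ^ a * ((p ^ 5) ^ k)⁻¹ * ((p ^ 5) ^ 5) ^ (n + 1)
          = -((p ^ 5) ^ (5 * n + a + j)) * (1 - ((p ^ 5) ^ (5 * n + a + j))⁻¹) := by
      intro k j hkj
      have hQ : ((p : ℂ) ^ 5) ^ (5 * n + a + j) ≠ 0 := pow_ne_zero _ hq0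
      have h1 : ((p : ℂ) ^ 5) ^ a * ((p ^ 5) ^ 5) ^ (n + 1)
          = (p ^ 5) ^ (5 * n + a + j) * (p ^ 5) ^ k := by
        rw [← pow_mul ((p : ℂ) ^ 5) 5 (n + 1), ← pow_add, ← pow_add]
        congr 1
        omega
      calc (1 : ℂ) - (p ^ 5) ^ a * ((p ^ 5) ^ k)⁻¹ * ((p ^ 5) ^ 5) ^ (n + 1)
          = 1 - (p ^ 5) ^ (5 * n + a + j) * ((p ^ 5) ^ k * ((p ^ 5) ^ k)⁻¹) := by
            rw [show ((p : ℂ) ^ 5) ^ a * ((p ^ 5) ^ k)⁻¹ * ((p ^ 5) ^ 5) ^ (n + 1)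
              = (p ^ 5) ^ a * ((p ^ 5) ^ 5) ^ (n + 1) * ((p ^ 5) ^ k)⁻¹ by ring, h1]
            ring
        _ = 1 - (p ^ 5) ^ (5 * n + a + j) := by
            rw [mul_inv_cancel₀ (pow_ne_zero _ hq0), mul_one]
        _ = -((p ^ 5) ^ (5 * n + a + j)) * (1 - ((p ^ 5) ^ (5 * n + a + j))⁻¹) := by
            rw [mul_sub, mul_one, neg_mul, mul_inv_cancel₀ hQ]
            ring
    rw [hnumrec, hdenrec,
      show ∀ x y : ℂ, x * (x * (x * (x * (x * y)))) = x ^ 5 * y from fun x y => by ring,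
      hBfac, key 0 5 rfl, key 1 4 rfl, key 2 3 rfl, key 3 2 rfl, key 4 1 rfl]
    have hE1 : (1 : ℂ) - ((p ^ 5) ^ (5 * n + a + 1))⁻¹ ≠ 0 := hden (5 * n + a)
    have hE2 : (1 : ℂ) - ((p ^ 5) ^ (5 * n + a + 2))⁻¹ ≠ 0 := hden (5 * n + a + 1)
    have hE3 : (1 : ℂ) - ((p ^ 5) ^ (5 * n + a + 3))⁻¹ ≠ 0 := hden (5 * n + a + 2)
    have hE4 : (1 : ℂ) - ((p ^ 5) ^ (5 * n + a + 4))⁻¹ ≠ 0 := hden (5 * n + a + 3)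
    have hE5 : (1 : ℂ) - ((p ^ 5) ^ (5 * n + a + 5))⁻¹ ≠ 0 := hden (5 * n + a + 4)
    have hD : (∏ k ∈ Finset.range (5 * n + a), (1 - ((p ^ 5) ^ (k + 1))⁻¹)) ≠ 0 :=
      Finset.prod_ne_zero_iff.mpr fun k _ => hden k
    set E1 := (1 : ℂ) - ((p ^ 5) ^ (5 * n + a + 1))⁻¹ with hE1d
    set E2 := (1 : ℂ) - ((p ^ 5) ^ (5 * n + a + 2))⁻¹ with hE2d
    set E3 := (1 : ℂ) - ((p ^ 5) ^ (5 * n + a + 3))⁻¹ with hE3d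
    set E4 := (1 : ℂ) - ((p ^ 5) ^ (5 * n + a + 4))⁻¹ with hE4d
    set E5 := (1 : ℂ) - ((p ^ 5) ^ (5 * n + a + 5))⁻¹ with hE5d
    set G := ((1 : ℂ) - ξ * (p ^ (a + 1 + 5 * n))⁻¹) ^ 5 with hGd
    set N := (∏ k ∈ Finset.range n, ((1 : ℂ) - ξ * (p ^ (a + 1 + 5 * k))⁻¹) ^ 5) with hNd
    set D := (∏ k ∈ Finset.range (5 * n + a), ((1 : ℂ) - ((p ^ 5) ^ (k + 1))⁻¹)) with hDd
    rw [div_eq_mul_inv, div_eq_mul_inv]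
    have hcancel : (D * E1 * E2 * E3 * E4 * E5)⁻¹
        = D⁻¹ * E1⁻¹ * E2⁻¹ * E3⁻¹ * E4⁻¹ * E5⁻¹ := by
      rw [mul_inv, mul_inv, mul_inv, mul_inv, mul_inv]
    rw [hcancel]
    have hpow : ((p : ℂ) ^ 5) ^ (5 * n + a + 1) * (p ^ 5) ^ (5 * n + a + 2)
          * (p ^ 5) ^ (5 * n + a + 3) * (p ^ 5) ^ (5 * n + a + 4) * (p ^ 5) ^ (5 * n + a + 5)
        = (p ^ 5) ^ (14 + 4 * a) * ((p ^ 5) ^ 20) ^ n * (p ^ (a + 1 + 5 * n)) ^ 5 := by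
      simp only [← pow_mul, ← pow_add]
      congr 1
      ring
    trans (((p : ℂ) ^ 5) ^ (5 * n + a + 1) * (p ^ 5) ^ (5 * n + a + 2)
        * (p ^ 5) ^ (5 * n + a + 3) * (p ^ 5) ^ (5 * n + a + 4) * (p ^ 5) ^ (5 * n + a + 5)
        * ((E1 * E1⁻¹) * (E2 * E2⁻¹) * (E3 * E3⁻¹) * (E4 * E4⁻¹) * (E5 * E5⁻¹))
        * (-(N * G * D⁻¹)))
    · ring
    · rw [mul_inv_cancel₀ hE1, mul_inv_cancel₀ hE2, mul_inv_cancel₀ hE3,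
        mul_inv_cancel₀ hE4, mul_inv_cancel₀ hE5, hpow]
      ring
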